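/- arXiv:2506.00793 — 2 statements merged into one kernel-verified Lean document; each statement's English description precedes it below -/
import Mathlib

section
/- Let n be a positive integer and H an n×n lower unitriangular matrix with entries in ℤ[q,q⁻¹]. Then there exist lower unitriangular matrices P and Q with entries in ℤ[q,q⁻¹] such that H = P·Q, all off-diagonal entries of P lie in q·ℤ[q], and all entries of Q are bar-invariant. -/
open LaurentPolynomial

/-- The bar involution on `ℤ[q,q⁻¹]`, sending `q ↦ q⁻¹`. -/
noncomputable def bar : LaurentPolynomial ℤ → LaurentPolynomial ℤ :=
  LaurentPolynomial.invert

/-- `f ∈ q·ℤ[q]`: all coefficients in non-positive degrees vanish. -/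
def InQZq (f : LaurentPolynomial ℤ) : Prop := ∀ n : ℤ, n ≤ 0 → f.coeff n = 0

/-- `f` is bar-invariant. -/
def BarInv (f : LaurentPolynomial ℤ) : Prop := bar f = f

/-- A square matrix is lower unitriangular. -/
def LowerUni {n : ℕ} {R : Type*} [One R] [Zero R] (A : Matrix (Fin n) (Fin n) R) : Prop :=
  (∀ i, A i i = 1) ∧ ∀ i j : Fin n, i < j → A i j = 0

noncomputable def tr (f : LaurentPolynomial ℤ) : LaurentPolynomial ℤ :=
  AddMonoidAlgebra.ofCoeff (Finsupp.filter (fun m => m ≤ 0) f.coeff)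

lemma tr_apply (f : LaurentPolynomial ℤ) (m : ℤ) :
    (tr f).coeff m = if m ≤ 0 then f.coeff m else 0 := by
  show Finsupp.filter (fun m => m ≤ 0) f.coeff m = _
  simp [Finsupp.filter_apply]

noncomputable def barPart (f : LaurentPolynomial ℤ) : LaurentPolynomial ℤ :=
  tr f + invert (tr f) - C (f.coeff 0)

lemma C_apply (a : ℤ) (m : ℤ) : (C a : LaurentPolynomial ℤ).coeff m = if m = 0 then a else 0 := by
  show (Finsupp.single (0:ℤ) a : ℤ →₀ ℤ) m = _
  rw [Finsupp.single_apply]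
  by_cases h : m = 0 <;> simp [h, eq_comm]

lemma barPart_apply (f : LaurentPolynomial ℤ) (m : ℤ) :
    (barPart f).coeff m = (tr f).coeff m + (tr f).coeff (-m) - (if m = 0 then f.coeff 0 else 0) := by
  rw [barPart, AddMonoidAlgebra.coeff_sub, AddMonoidAlgebra.coeff_add, Finsupp.sub_apply, Finsupp.add_apply, _root_.C_apply, invert_apply]

lemma barInv_barPart (f : LaurentPolynomial ℤ) : BarInv (barPart f) := by
  show invert (barPart f) = barPart f
  simp only [barPart, map_sub, map_add, invert_C]
  rw [LaurentPolynomial.involutive_invert (tr f)]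
  ring

lemma barInv_one : BarInv 1 := by
  show invert 1 = 1; exact map_one _

lemma barInv_zero : BarInv 0 := by
  show invert 0 = 0; exact map_zero _

lemma inQZq_sub_barPart (f : LaurentPolynomial ℤ) : InQZq (f - barPart f) := by
  intro m hm
  rw [AddMonoidAlgebra.coeff_sub, Finsupp.sub_apply, barPart_apply, tr_apply, tr_apply]
  rcases lt_or_eq_of_le hm with h | h
  · rw [if_pos hm, if_neg (by omega), if_neg (by omega)]; ring
  · subst h; simp

lemma inQZq_zero : InQZq 0 := fun _ _ => rfl

/-- recursive construction of the pair (P entry, Q entry) -/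
noncomputable def E {n : ℕ} (H : Matrix (Fin n) (Fin n) (LaurentPolynomial ℤ)) :
    Fin n → Fin n → LaurentPolynomial ℤ × LaurentPolynomial ℤ
  | i, j =>
    if h : (j : ℕ) < (i : ℕ) then
      let r := H i j - ∑ k ∈ (Finset.Ioo j i).attach, (E H i k.1).1 * (E H k.1 j).2
      (r - barPart r, barPart r)
    else if (i : ℕ) = (j : ℕ) then (1, 1) else (0, 0)
  termination_by i j => (i : ℕ) - (j : ℕ)
  decreasing_by
  · have hk := Finset.mem_Ioo.mp k.2
    have h1 : (j : ℕ) < (k.1 : ℕ) := hk.1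
    have h2 : (k.1 : ℕ) < (i : ℕ) := hk.2
    omega
  · have hk := Finset.mem_Ioo.mp k.2
    have h1 : (j : ℕ) < (k.1 : ℕ) := hk.1
    have h2 : (k.1 : ℕ) < (i : ℕ) := hk.2
    omega

lemma E_diag {n : ℕ} (H : Matrix (Fin n) (Fin n) (LaurentPolynomial ℤ)) (i : Fin n) :
    E H i i = (1, 1) := by
  rw [E]; simp

lemma E_upper {n : ℕ} (H : Matrix (Fin n) (Fin n) (LaurentPolynomial ℤ)) {i j : Fin n}
    (h : i < j) : E H i j = (0, 0) := by
  rw [E]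
  have h' : (i : ℕ) < (j : ℕ) := h
  rw [dif_neg (by omega), if_neg (by omega)]

lemma E_lower {n : ℕ} (H : Matrix (Fin n) (Fin n) (LaurentPolynomial ℤ)) {i j : Fin n}
    (h : j < i) :
    E H i j = (let r := H i j - ∑ k ∈ (Finset.Ioo j i).attach, (E H i k.1).1 * (E H k.1 j).2
      (r - barPart r, barPart r)) := by
  rw [E]
  have h' : (j : ℕ) < (i : ℕ) := h
  rw [dif_pos h']

theorem statement2 (n : ℕ) (hn : 0 < n)
    (H : Matrix (Fin n) (Fin n) (LaurentPolynomial ℤ)) (hH : LowerUni H) :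
    ∃ P Q : Matrix (Fin n) (Fin n) (LaurentPolynomial ℤ),
      LowerUni P ∧ LowerUni Q ∧ H = P * Q ∧
      (∀ i j : Fin n, i ≠ j → InQZq (P i j)) ∧
      (∀ i j : Fin n, BarInv (Q i j)) := by
  refine ⟨fun i j => (E H i j).1, fun i j => (E H i j).2, ⟨?_, ?_⟩, ⟨?_, ?_⟩, ?_, ?_, ?_⟩
  · intro i; show (E H i i).1 = 1; rw [E_diag]
  · intro i j h; show (E H i j).1 = 0; rw [E_upper H h]
  · intro i; show (E H i i).2 = 1; rw [E_diag]
  · intro i j h; show (E H i j).2 = 0; rw [E_upper H h]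
  · -- H = P * Q
    apply Matrix.ext
    intro i j
    erw [Matrix.mul_apply]
    show H i j = ∑ k, (E H i k).1 * (E H k j).2
    rcases lt_trichotomy i j with h | h | h
    · rw [hH.2 i j h]
      symm
      apply Finset.sum_eq_zero
      intro k _
      rcases lt_or_ge i k with hk | hk
      · rw [E_upper H hk]; simp
      · have : k < j := lt_of_le_of_lt hk h
        rw [E_upper H this]; simp
    · subst h; rw [hH.1 i]
      rw [Finset.sum_eq_single i]
      · rw [E_diag]; norm_num
      · intro k _ hk
        rcases lt_or_gt_of_ne hk with hlt | hgt
        · rw [E_upper H (show k < i from hlt)]; simp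
        · rw [E_upper H (show i < k from hgt)]; simp
      · simp
    · -- j < i
      have key : ∑ k, (E H i k).1 * (E H k j).2
          = ∑ k ∈ Finset.Icc j i, (E H i k).1 * (E H k j).2 := by
        symm
        apply Finset.sum_subset (Finset.subset_univ _)
        intro k _ hk
        rw [Finset.mem_Icc, not_and_or] at hk
        rcases hk with hk | hk
        · have : k < j := lt_of_not_ge hk
          rw [E_upper H this]; simp
        · have : i < k := lt_of_not_ge hk
          rw [E_upper H this]; simp
      rw [key]
      have hsplit : Finset.Icc j i = insert j (insert i (Finset.Ioo j i)) := by
        ext k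
        simp only [Finset.mem_Icc, Finset.mem_insert, Finset.mem_Ioo]
        constructor
        · rintro ⟨h1, h2⟩
          rcases eq_or_lt_of_le h1 with h1 | h1
          · left; exact h1.symm
          · rcases eq_or_lt_of_le h2 with h2 | h2
            · right; left; exact h2
            · right; right; exact ⟨h1, h2⟩
        · rintro (rfl | rfl | ⟨h1, h2⟩)
          · exact ⟨le_refl _, le_of_lt h⟩
          · exact ⟨le_of_lt h, le_refl _⟩
          · exact ⟨le_of_lt h1, le_of_lt h2⟩
      rw [hsplit, Finset.sum_insert, Finset.sum_insert]
      · rw [E_diag, E_diag, E_lower H h]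
        simp only
        rw [← Finset.sum_attach (Finset.Ioo j i) (fun k => (E H i k).1 * (E H k j).2)]
        ring
      · simp
      · simp only [Finset.mem_insert, Finset.mem_Ioo]
        push_neg
        exact ⟨ne_of_lt h, fun h1 => absurd h1 (lt_irrefl j)⟩
  · intro i j hij
    show InQZq (E H i j).1
    rcases lt_or_gt_of_ne hij with hlt | hgt
    · rw [E_upper H hlt]; exact inQZq_zero
    · rw [E_lower H hgt]; exact inQZq_sub_barPart _
  · intro i j
    show BarInv (E H i j).2
    rcases lt_trichotomy i j with h | h | h
    · rw [E_upper H h]; exact barInv_zero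
    · subst h; rw [E_diag]; exact barInv_one
    · rw [E_lower H h]; exact barInv_barPart _
end

section
/- Let σ be an admissible automorphism of a symmetric Cartan datum X = (I, (·,·)), with J the set of σ-orbits, and for each j ∈ J set α_j = Σ_{i∈j} α_i. Then the bilinear form restricted to the span of the α_j satisfies: (α_j, α_j) = (α_i, α_i)·|j| for any i ∈ j, and for j ≠ j', (α_j, α_{j'}) = Σ_{i∈j, i'∈j'} (α_i, α_{i'}). Moreover, (J, (·,·)) is again a Cartan datum, i.e., (α_j,α_j) ∈ 2ℤ_{>0} for all j and 2(α_j,α_{j'})/(α_j,α_j) ∈ ℤ_{≤0} for j ≠ j'. -/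
open Finset

/-- Folding a symmetric Cartan datum along an admissible automorphism yields a Cartan datum,
with `(α_j, α_j) = (α_i, α_i)·|j|` and `(α_j, α_{j'}) = Σ_{i∈j, i'∈j'} (α_i, α_{i'})`. -/
theorem statement8 {I : Type*} [Fintype I] [DecidableEq I]
    (B : I → I → ℤ)
    (hsymmB : ∀ i i', B i i' = B i' i)
    (hpos : ∀ i, 0 < B i i) (heven : ∀ i, Even (B i i))
    (hoff : ∀ i i', i ≠ i' → B i i' ≤ 0)
    (hdvd : ∀ i i', i ≠ i' → B i i ∣ 2 * B i i')
    (hcartanSymm : ∀ i i', 2 * B i i' * B i' i' = 2 * B i' i * B i i)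
    (σ : Equiv.Perm I)
    (hσB : ∀ i i', B (σ i) (σ i') = B i i')
    (hadm : ∀ i i', i ≠ i' → (∃ k : ℤ, (σ ^ k) i = i') → B i i' = 0)
    (J : Type*) [Fintype J] [DecidableEq J] (π : I → J)
    (hπsurj : Function.Surjective π)
    (hπ : ∀ i i', π i = π i' ↔ ∃ k : ℤ, (σ ^ k) i = i') :
    letI BJ : J → J → ℤ := fun j j' =>
      ∑ i ∈ univ.filter (fun i => π i = j), ∑ i' ∈ univ.filter (fun i' => π i' = j'), B i i'
    (∀ (j : J) (i : I), π i = j →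
      BJ j j = B i i * ((univ.filter (fun i' => π i' = j)).card : ℤ)) ∧
    (∀ j j' : J, j ≠ j' →
      BJ j j' = ∑ i ∈ univ.filter (fun i => π i = j),
        ∑ i' ∈ univ.filter (fun i' => π i' = j'), B i i') ∧
    (∀ j : J, 0 < BJ j j ∧ Even (BJ j j)) ∧
    (∀ j j' : J, j ≠ j' → BJ j j' ≤ 0 ∧ BJ j j ∣ 2 * BJ j j') := by
  set BJ : J → J → ℤ := fun j j' =>
      ∑ i ∈ univ.filter (fun i => π i = j), ∑ i' ∈ univ.filter (fun i' => π i' = j'), B i i'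
    with hBJdef
  -- invariance of B under integer powers of σ
  have hinv : ∀ i i', B (σ⁻¹ i) (σ⁻¹ i') = B i i' := by
    intro i i'
    have h := hσB (σ⁻¹ i) (σ⁻¹ i')
    simpa using h.symm
  have hσBk : ∀ (k : ℤ) (i i' : I), B ((σ ^ k) i) ((σ ^ k) i') = B i i' := by
    intro k
    induction k using Int.induction_on with
    | zero => simp
    | succ n ih =>
      intro i i'
      rw [zpow_add_one, Equiv.Perm.mul_apply, Equiv.Perm.mul_apply, ih, hσB]
    | pred n ih =>
      intro i i'
      rw [zpow_sub_one, Equiv.Perm.mul_apply, Equiv.Perm.mul_apply, ih, hinv]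
  -- diagonal entries constant on orbits
  have hdiag : ∀ i i', π i = π i' → B i i = B i' i' := by
    intro i i' h
    obtain ⟨k, hk⟩ := (hπ i i').mp h
    rw [← hk, hσBk]
  -- fibers are σ^k stable
  have hfib : ∀ (k : ℤ) (x : I), π ((σ ^ k) x) = π x := by
    intro k x
    exact ((hπ x ((σ ^ k) x)).mpr ⟨k, rfl⟩).symm
  -- diagonal formula
  have hBJdiag : ∀ (j : J) (i : I), π i = j →
      BJ j j = B i i * ((univ.filter (fun i' => π i' = j)).card : ℤ) := by
    intro j i hi
    have h1 : BJ j j = ∑ x ∈ univ.filter (fun i' => π i' = j), B x x := by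
      apply Finset.sum_congr rfl
      intro x hx
      simp only [mem_filter, mem_univ, true_and] at hx
      apply Finset.sum_eq_single_of_mem x (by simp [hx])
      intro y hy hne
      simp only [mem_filter, mem_univ, true_and] at hy
      rw [hsymmB]
      exact hadm y x hne ((hπ y x).mp (hy.trans hx.symm))
    rw [h1]
    have h2 : ∀ x ∈ univ.filter (fun i' => π i' = j), B x x = B i i := by
      intro x hx
      simp only [mem_filter, mem_univ, true_and] at hx
      exact hdiag x i (hx.trans hi.symm)
    rw [Finset.sum_congr rfl h2, Finset.sum_const, nsmul_eq_mul, mul_comm]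
  refine ⟨hBJdiag, fun j j' _ => rfl, ?_, ?_⟩
  · intro j
    obtain ⟨i, hi⟩ := hπsurj j
    have hmem : i ∈ univ.filter (fun i' => π i' = j) := by simp [hi]
    have hcard : 0 < ((univ.filter (fun i' => π i' = j)).card : ℤ) := by
      exact_mod_cast Finset.card_pos.mpr ⟨i, hmem⟩
    rw [hBJdiag j i hi]
    exact ⟨mul_pos (hpos i) hcard, (heven i).mul_right _⟩
  · intro j j' hne
    have hxy : ∀ x ∈ univ.filter (fun i => π i = j), ∀ y ∈ univ.filter (fun i' => π i' = j'),
        x ≠ y := by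
      intro x hx y hy hxyeq
      simp only [mem_filter, mem_univ, true_and] at hx hy
      exact hne (hx ▸ hxyeq ▸ hy)
    constructor
    · apply Finset.sum_nonpos
      intro x hx
      apply Finset.sum_nonpos
      intro y hy
      exact hoff x y (hxy x hx y hy)
    · obtain ⟨i₀, hi₀⟩ := hπsurj j
      have hmem : i₀ ∈ univ.filter (fun i => π i = j) := by simp [hi₀]
      -- rows are constant on orbit j
      have hrow : ∀ x ∈ univ.filter (fun i => π i = j),
          ∑ y ∈ univ.filter (fun i' => π i' = j'), B x y
            = ∑ y ∈ univ.filter (fun i' => π i' = j'), B i₀ y := by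
        intro x hx
        simp only [mem_filter, mem_univ, true_and] at hx
        obtain ⟨k, hk⟩ := (hπ i₀ x).mp (hi₀.trans hx.symm)
        subst hk
        refine Finset.sum_equiv (σ ^ k : Equiv.Perm I) ?_ ?_ |>.symm
        · intro y
          simp [hfib k y]
        · intro y _
          rw [hσBk]
      set S : ℤ := ∑ y ∈ univ.filter (fun i' => π i' = j'), B i₀ y with hS
      have hBJ' : BJ j j' = ((univ.filter (fun i => π i = j)).card : ℤ) * S := by
        show (∑ x ∈ univ.filter (fun i => π i = j),
          ∑ y ∈ univ.filter (fun i' => π i' = j'), B x y) = _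
        rw [Finset.sum_congr rfl hrow, Finset.sum_const, nsmul_eq_mul]
      have hdS : B i₀ i₀ ∣ 2 * S := by
        rw [hS, Finset.mul_sum]
        apply Finset.dvd_sum
        intro y hy
        exact hdvd i₀ y (hxy i₀ hmem y hy)
      rw [hBJdiag j i₀ hi₀, hBJ']
      rw [mul_comm (B i₀ i₀), mul_left_comm]
      exact mul_dvd_mul_left _ hdS
end
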